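/- A bounded-above subharmonic function on C that takes the value -∞ at some point is identically -∞. -/

import Mathlib

open Metric Complex Polynomial Filter Finset
open scoped ENNReal NNReal

/-- Subharmonicity on ℂ for EReal-valued functions, via upper semicontinuity and the
domination principle by harmonic majorants: real parts of polynomials (which are dense
among harmonic functions on discs) dominating u on a circle dominate u on the disc. -/
def SubharmonicC (u : ℂ → EReal) : Prop :=
  UpperSemicontinuous u ∧
  ∀ (c : ℂ) (r : ℝ), 0 < r → ∀ p : Polynomial ℂ,
    (∀ z ∈ Metric.sphere c r, u z ≤ (((p.eval z).re : ℝ) : EReal)) →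
    ∀ z ∈ Metric.closedBall c r, u z ≤ (((p.eval z).re : ℝ) : EReal)


lemma ereal_le_of_forall_add {x : EReal} {c : ℝ} (h : ∀ ε : ℝ, 0 < ε → x ≤ ((c + ε : ℝ) : EReal)) :
    x ≤ (c : EReal) := by
  by_contra hc
  push_neg at hc
  obtain ⟨q, hq1, hq2⟩ := EReal.exists_between_coe_real hc
  have hq1' : c < q := EReal.coe_lt_coe_iff.mp hq1
  have h2 := h ((q - c)/2) (by linarith)
  have h4 : ((q:ℝ) : EReal) < ((c + (q - c)/2 : ℝ) : EReal) := lt_of_lt_of_le hq2 h2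
  have := EReal.coe_lt_coe_iff.mp h4
  linarith

lemma ereal_eq_bot_of_forall {x : EReal} (h : ∀ t : ℝ, x ≤ (t : EReal)) : x = ⊥ := by
  by_contra hx
  obtain ⟨q, hq1, hq2⟩ := EReal.exists_between_coe_real (Ne.bot_lt hx)
  have h3 : ((q-1:ℝ) : EReal) < ((q:ℝ) : EReal) := EReal.coe_lt_coe_iff.mpr (by linarith)
  exact lt_irrefl _ (hq2.trans_le ((h (q-1)).trans h3.le))

lemma key_ident (n : ℕ) (ζ : ℂ) (hζ : ‖ζ‖ = 1) :
    2 * (∑ k ∈ range (n+1), (((2*n).choose (n+k) : ℕ) : ℂ) * ζ^k).re - ((2*n).choose n : ℕ)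
      = (2 + 2 * ζ.re)^n := by
  set A := ∑ k ∈ range (n+1), (((2*n).choose (n+k) : ℕ) : ℂ) * ζ^k with hA
  have hu : ζ * (starRingEnd ℂ) ζ = 1 := by
    rw [Complex.mul_conj]
    norm_cast
    rw [Complex.normSq_eq_norm_sq, hζ]; norm_num
  set u := (starRingEnd ℂ) ζ with hudef
  -- step: (1+ζ)^(2n) * u^n = A + conj A - c_n
  have expand : (ζ + 1)^(2*n) * u^n = ∑ j ∈ range (2*n+1), ((2*n).choose j : ℂ) * (ζ^j * u^n) := by
    rw [add_pow]
    rw [Finset.sum_mul]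
    congr 1; ext j; ring
  have split : ∑ j ∈ range (2*n+1), ((2*n).choose j : ℂ) * (ζ^j * u^n)
      = (∑ j ∈ range n, ((2*n).choose j : ℂ) * (ζ^j * u^n))
        + ∑ j ∈ Finset.Ico n (2*n+1), ((2*n).choose j : ℂ) * (ζ^j * u^n) := by
    rw [Finset.sum_range_add_sum_Ico _ (by omega)]
  have second : ∑ j ∈ Finset.Ico n (2*n+1), ((2*n).choose j : ℂ) * (ζ^j * u^n) = A := by
    rw [Finset.sum_Ico_eq_sum_range]
    have : 2*n+1-n = n+1 := by omega
    rw [this, hA]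
    refine Finset.sum_congr rfl fun k hk => ?_
    congr 1
    have : ζ^(n+k) * u^n = ζ^k * (ζ*u)^n := by ring
    rw [this, hu, one_pow, mul_one]
  have first : ∑ j ∈ range n, ((2*n).choose j : ℂ) * (ζ^j * u^n)
      = (starRingEnd ℂ) (A - ((2*n).choose n : ℕ)) := by
    have e1 : ∀ j ∈ range n, ((2*n).choose j : ℂ) * (ζ^j * u^n)
        = ((2*n).choose j : ℂ) * u^(n-j) := by
      intro j hj
      have hj' : j < n := Finset.mem_range.mp hj
      congr 1
      have : ζ^j * u^n = (ζ*u)^j * u^(n-j) := by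
        rw [mul_pow, mul_assoc, ← pow_add]
        congr 2
        omega
      rw [this, hu, one_pow, one_mul]
    rw [Finset.sum_congr rfl e1, ← Finset.sum_range_reflect]
    have e2 : ∀ j ∈ range n, ((2*n).choose (n-1-j) : ℂ) * u^(n-(n-1-j))
        = (starRingEnd ℂ) (((2*n).choose (n+(j+1)) : ℂ) * ζ^(j+1)) := by
      intro j hj
      have hj' : j < n := Finset.mem_range.mp hj
      rw [map_mul, map_pow]
      have h1 : n-1-j = n-(j+1) := by omega
      have h2 : n-(n-(j+1)) = j+1 := by omega
      have h3 : (2*n).choose (n-(j+1)) = (2*n).choose (n+(j+1)) := by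
        rw [← Nat.choose_symm (by omega : n+(j+1) ≤ 2*n)]
        congr 1
        omega
      rw [h1, h2, h3]
      congr 1
      exact (map_natCast (starRingEnd ℂ) _).symm
    rw [Finset.sum_congr rfl e2, ← map_sum]
    congr 1
    rw [hA, Finset.sum_range_succ']
    push_cast
    simp
  have real_eq : (ζ + 1)^(2*n) * u^n = ((2 + 2*ζ.re : ℝ) : ℂ)^n := by
    have h1 : (ζ + 1)^(2*n) = ((ζ+1)^2)^n := by rw [← pow_mul, mul_comm 2 n, pow_mul]
    rw [h1, ← mul_pow]
    congr 1
    have : (ζ+1)^2 * u = (ζ+1) * ((ζ+1)*u) := by ring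
    rw [this]
    have h2 : (ζ+1)*u = u + 1 := by
      have : (ζ+1)*u = ζ*u + u := by ring
      rw [this, hu]; ring
    rw [h2]
    have h3 : (ζ+1)*(u+1) = (ζ + u) + (1 + ζ*u) := by ring
    rw [h3, hu, hudef, Complex.add_conj]
    push_cast
    ring
  have final : A + (starRingEnd ℂ) (A - ((2*n).choose n : ℕ)) = ((2 + 2*ζ.re : ℝ) : ℂ)^n := by
    rw [← real_eq, expand, split, first, second]; ring
  have := congrArg Complex.re final
  simp only [Complex.add_re, Complex.conj_re, Complex.sub_re] at this
  rw [← Complex.ofReal_pow] at final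
  have hre := congrArg Complex.re final
  simp only [Complex.add_re, Complex.conj_re, Complex.sub_re, Complex.ofReal_re] at hre
  have : ((((2*n).choose n : ℕ) : ℂ)).re = ((2*n).choose n : ℝ) := by norm_cast
  rw [this] at hre
  linarith

lemma bump_poly (n : ℕ) (a w₁ : ℂ) (s : ℝ) (hs : 0 < s) (hw : w₁ ∈ sphere a s) :
    ∃ P : Polynomial ℂ,
      (∀ z ∈ sphere a s, (P.eval z).re = (1 - dist z w₁ ^ 2 / (4 * s ^ 2)) ^ n) ∧
      (P.eval a).re = (2*n).choose n / 4 ^ n := by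
  have hws : dist w₁ a = s := mem_sphere.mp hw
  have hba : w₁ - a ≠ 0 := by
    intro h
    rw [sub_eq_zero] at h
    rw [h, dist_self] at hws
    exact hs.ne' hws.symm
  set b := w₁ - a with hb
  refine ⟨Polynomial.C ((4:ℂ)^n)⁻¹ *
    (2 * (∑ k ∈ range (n+1), Polynomial.C (((2*n).choose (n+k) : ℕ) : ℂ)
        * (Polynomial.C b⁻¹ * (Polynomial.X - Polynomial.C a))^k)
      - Polynomial.C (((2*n).choose n : ℕ) : ℂ)), ?_, ?_⟩
  · intro z hz
    have hzd : dist z a = s := mem_sphere.mp hz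
    set ζ := (z - a) * b⁻¹ with hζdef
    have habs : ‖ζ‖ = 1 := by
      rw [hζdef, norm_mul, norm_inv]
      have h1 : ‖z - a‖ = s := by
        rw [Complex.dist_eq] at hzd; exact hzd
      have h2 : ‖b‖ = s := by
        rw [Complex.dist_eq] at hws; exact hws
      rw [h1, h2]
      field_simp
    have heval : Polynomial.eval z (Polynomial.C ((4:ℂ)^n)⁻¹ *
        (2 * (∑ k ∈ range (n+1), Polynomial.C (((2*n).choose (n+k) : ℕ) : ℂ)
            * (Polynomial.C b⁻¹ * (Polynomial.X - Polynomial.C a))^k)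
          - Polynomial.C (((2*n).choose n : ℕ) : ℂ)))
        = ((4:ℂ)^n)⁻¹ * (2 * (∑ k ∈ range (n+1), (((2*n).choose (n+k) : ℕ) : ℂ) * ζ^k)
          - (((2*n).choose n : ℕ) : ℂ)) := by
      simp [Polynomial.eval_finset_sum, mul_pow, hζdef]
      congr 2
      funext k
      ring
    rw [heval]
    have h4 : ((4:ℂ)^n)⁻¹ = ((((4:ℝ)^n)⁻¹ : ℝ) : ℂ) := by push_cast; ring
    rw [h4, Complex.re_ofReal_mul]
    have hsub : (2 * (∑ k ∈ range (n+1), (((2*n).choose (n+k) : ℕ) : ℂ) * ζ^k)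
          - (((2*n).choose n : ℕ) : ℂ)).re
        = 2 * (∑ k ∈ range (n+1), (((2*n).choose (n+k) : ℕ) : ℂ) * ζ^k).re
          - ((2*n).choose n : ℕ) := by
      simp
    rw [hsub, key_ident n ζ habs]
    -- geometry: dist z w₁ ^ 2 = (2 - 2*ζ.re) * s^2
    have hgeo : dist z w₁ ^ 2 = (2 - 2*ζ.re) * s^2 := by
      have hzw : z - w₁ = (ζ - 1) * b := by
        rw [hζdef]
        field_simp
        ring
      have : dist z w₁ = ‖ζ - 1‖ * s := by
        have h2 : ‖b‖ = s := by rw [Complex.dist_eq] at hws; exact hws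
        rw [Complex.dist_eq, hzw, norm_mul, h2]
      rw [this, mul_pow, Complex.sq_norm]
      have h1 : Complex.normSq ζ = 1 := by
        rw [Complex.normSq_eq_norm_sq, habs]; norm_num
      have h2 : Complex.normSq (ζ - 1) = Complex.normSq ζ - 2*ζ.re + 1 := by
        simp [Complex.normSq_apply, Complex.sub_re, Complex.sub_im]
        ring
      rw [h2, h1]
      ring
    rw [hgeo]
    have hs2 : (4 : ℝ) * s^2 ≠ 0 := by positivity
    have : 1 - (2 - 2*ζ.re) * s^2 / (4 * s^2) = (2 + 2*ζ.re)/4 := by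
      field_simp
      try ring
    rw [this]
    rw [div_pow, ← inv_mul_eq_div]
  · have heval : Polynomial.eval a (Polynomial.C ((4:ℂ)^n)⁻¹ *
        (2 * (∑ k ∈ range (n+1), Polynomial.C (((2*n).choose (n+k) : ℕ) : ℂ)
            * (Polynomial.C b⁻¹ * (Polynomial.X - Polynomial.C a))^k)
          - Polynomial.C (((2*n).choose n : ℕ) : ℂ)))
        = ((4:ℂ)^n)⁻¹ * (((2*n).choose n : ℕ) : ℂ) := by
      simp [Polynomial.eval_finset_sum]
      rw [Finset.sum_eq_single 0]
      · simp; ring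
      · intro k hk hk0
        simp [zero_pow hk0]
      · simp
    rw [heval]
    have h4 : ((4:ℂ)^n)⁻¹ = ((((4:ℝ)^n)⁻¹ : ℝ) : ℂ) := by push_cast; ring
    rw [h4, Complex.re_ofReal_mul]
    have : ((((2*n).choose n : ℕ) : ℂ)).re = ((2*n).choose n : ℝ) := by norm_cast
    rw [this]
    ring

lemma analytic_dom (u : ℂ → EReal) (hsub : SubharmonicC u) {a : ℂ} {s ρ : ℝ} (hs : 0 < s)
    (hsρ : s < ρ) {f : ℂ → ℂ} (hf : DifferentiableOn ℂ f (Metric.ball a ρ))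
    (hyp : ∀ z ∈ sphere a s, u z ≤ (((f z).re : ℝ) : EReal)) :
    ∀ z ∈ closedBall a s, u z ≤ (((f z).re : ℝ) : EReal) := by
  intro z hz
  apply ereal_le_of_forall_add
  intro ε hε
  set R : NNReal := ((s+ρ)/2).toNNReal with hR
  have hRpos : 0 < R := by
    rw [hR]
    apply Real.toNNReal_pos.mpr
    linarith
  have hRs : s < (R:ℝ) := by
    rw [hR, Real.coe_toNNReal _ (by linarith : (0:ℝ) ≤ (s+ρ)/2)]
    linarith
  have hRρ : (R:ℝ) < ρ := by
    rw [hR, Real.coe_toNNReal _ (by linarith : (0:ℝ) ≤ (s+ρ)/2)]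
    linarith
  have hdiff : DifferentiableOn ℂ f (closedBall a R) := by
    apply hf.mono
    intro w hw
    exact lt_of_le_of_lt (mem_closedBall.mp hw) hRρ
  have hps := hdiff.hasFPowerSeriesOnBall hRpos
  set r' : NNReal := ((s + R)/2).toNNReal with hr'
  have hr's : s < (r' : ℝ) := by
    rw [hr', Real.coe_toNNReal _ (by positivity : (0:ℝ) ≤ (s + (R:ℝ))/2)]
    linarith
  have hr'R : (r' : ℝ≥0∞) < (R : ℝ≥0∞) := by
    rw [ENNReal.coe_lt_coe, ← NNReal.coe_lt_coe, hr',
      Real.coe_toNNReal _ (by positivity : (0:ℝ) ≤ (s + (R:ℝ))/2)]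
    linarith
  have huconv := hps.tendstoUniformlyOn' hr'R
  rw [Metric.tendstoUniformlyOn_iff] at huconv
  obtain ⟨n, hn⟩ := (huconv (ε/2) (by linarith)).exists
  set p := cauchyPowerSeries f a R with hp
  set P : Polynomial ℂ := ∑ k ∈ range n, Polynomial.C (p.coeff k) * (Polynomial.X - Polynomial.C a)^k
    with hP
  have hPeval : ∀ w : ℂ, P.eval w = p.partialSum n (w - a) := by
    intro w
    rw [hP, Polynomial.eval_finset_sum, FormalMultilinearSeries.partialSum]
    refine Finset.sum_congr rfl fun k hk => ?_
    rw [p.apply_eq_pow_smul_coeff, smul_eq_mul]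
    simp
    ring
  have hclose : ∀ w ∈ closedBall a s, ‖f w - P.eval w‖ < ε/2 := by
    intro w hw
    have hw' : w ∈ ball a r' := by
      rw [mem_ball]
      exact lt_of_le_of_lt (mem_closedBall.mp hw) hr's
    have := hn w hw'
    rw [dist_eq_norm] at this
    rw [hPeval]
    exact this
  -- apply the subharmonic axiom to P + C (ε : ℂ)
  have hdom := hsub.2 a s hs (P + Polynomial.C ((ε/2:ℝ):ℂ)) ?_ z hz
  · have h1 : ((P + Polynomial.C ((ε/2:ℝ):ℂ)).eval z).re = (P.eval z).re + ε/2 := by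
      simp
    rw [h1] at hdom
    refine hdom.trans ?_
    rw [EReal.coe_le_coe_iff]
    have h2 : (P.eval z).re - (f z).re ≤ ‖f z - P.eval z‖ := by
      have h3 := Complex.abs_re_le_norm (f z - P.eval z)
      have h4 : (f z - P.eval z).re = (f z).re - (P.eval z).re := by simp
      rw [h4] at h3
      have h5 := neg_abs_le ((f z).re - (P.eval z).re)
      linarith
    have h4 := hclose z hz
    linarith
  · intro w hw
    have hw' : w ∈ closedBall a s := sphere_subset_closedBall hw
    refine (hyp w hw).trans ?_
    rw [EReal.coe_le_coe_iff]
    have h1 : ((P + Polynomial.C ((ε/2:ℝ):ℂ)).eval w).re = (P.eval w).re + ε/2 := by simp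
    rw [h1]
    have h2 := hclose w hw'
    have h3 := Complex.abs_re_le_norm (f w - P.eval w)
    have h4 : (f w - P.eval w).re = (f w).re - (P.eval w).re := by simp
    rw [h4] at h3
    have := abs_le.mp h3
    linarith

lemma bump_dom (u : ℂ → EReal) (hsub : SubharmonicC u) {a w₁ : ℂ} {s ρ : ℝ} (hs : 0 < s)
    (hsρ : s < ρ) {f : ℂ → ℂ} (hf : DifferentiableOn ℂ f (Metric.ball a ρ))
    {ε δ₁ : ℝ} (hε : 0 < ε) (hδ : 0 < δ₁) (hw : w₁ ∈ sphere a s)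
    (hyp1 : ∀ z ∈ sphere a s, u z ≤ (((f z).re : ℝ) : EReal))
    (hyp2 : ∀ z ∈ sphere a s, dist z w₁ < δ₁ → u z ≤ (((f z).re - ε : ℝ) : EReal)) :
    ∃ c : ℝ, 0 < c ∧ u a ≤ (((f a).re - c : ℝ) : EReal) := by
  set d := min δ₁ s with hd
  have hdpos : 0 < d := lt_min hδ hs
  have hds : d ≤ s := min_le_right _ _
  set ρ₁ : ℝ := 1 - d^2/(4*s^2) with hρ₁
  have hρ₁0 : 0 ≤ ρ₁ := by
    rw [hρ₁]
    have : d^2/(4*s^2) ≤ 1 := by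
      rw [div_le_one (by positivity)]
      nlinarith
    linarith
  have hρ₁1 : ρ₁ < 1 := by
    rw [hρ₁]
    have : 0 < d^2/(4*s^2) := by positivity
    linarith
  -- find n with (2n+1) ρ₁^n < 1
  obtain ⟨n, hn⟩ : ∃ n : ℕ, (2*(n:ℝ)+1) * ρ₁^n < 1 := by
    have h1 : Filter.Tendsto (fun n : ℕ => (n:ℝ)^1 * ρ₁^n) atTop (nhds 0) :=
      (summable_pow_mul_geometric_of_norm_lt_one (R := ℝ) 1
        (by rw [Real.norm_eq_abs, _root_.abs_of_nonneg hρ₁0]; exact hρ₁1)).tendsto_atTop_zero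
    have h2 : Filter.Tendsto (fun n : ℕ => ρ₁^n) atTop (nhds 0) :=
      tendsto_pow_atTop_nhds_zero_of_lt_one hρ₁0 hρ₁1
    have h3 : Filter.Tendsto (fun n : ℕ => (2*(n:ℝ)+1) * ρ₁^n) atTop (nhds 0) := by
      have := ((h1.const_mul 2).add h2)
      simp only [pow_one] at this
      convert this using 2 with n
      · ring
      · simp
    obtain ⟨n, hn⟩ := (h3.eventually (gt_mem_nhds one_pos)).exists
    exact ⟨n, hn⟩
  obtain ⟨P, hPsphere, hPa⟩ := bump_poly n a w₁ s hs hw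
  set G : ℂ → ℂ := fun z => f z - (ε:ℂ) * (P.eval z - ((ρ₁^n : ℝ):ℂ)) with hG
  have hGre : ∀ z : ℂ, (G z).re = (f z).re - ε * ((P.eval z).re - ρ₁^n) := by
    intro z
    rw [hG]
    simp [Complex.sub_re, Complex.re_ofReal_mul, ← Complex.ofReal_pow]
  have hGdiff : DifferentiableOn ℂ G (Metric.ball a ρ) := by
    apply hf.sub
    apply DifferentiableOn.const_mul
    apply DifferentiableOn.sub
    · exact (P.differentiable.differentiableOn)
    · exact differentiableOn_const _
  have hB : ∀ z ∈ sphere a s, 0 ≤ 1 - dist z w₁ ^ 2 / (4 * s ^ 2) ∧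
      1 - dist z w₁ ^ 2 / (4 * s ^ 2) ≤ 1 := by
    intro z hz
    have h1 : dist z w₁ ≤ 2*s := by
      have := dist_triangle z a w₁
      have hza : dist z a = s := mem_sphere.mp hz
      have haw : dist a w₁ = s := by rw [dist_comm]; exact mem_sphere.mp hw
      linarith
    constructor
    · have : dist z w₁^2 ≤ 4*s^2 := by nlinarith [dist_nonneg (x := z) (y := w₁)]
      have := div_le_one_of_le₀ this (by positivity)
      linarith
    · have : 0 ≤ dist z w₁ ^ 2 / (4*s^2) := by positivity
      linarith
  have hsphere : ∀ z ∈ sphere a s, u z ≤ (((G z).re : ℝ) : EReal) := by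
    intro z hz
    obtain ⟨hB0, hB1⟩ := hB z hz
    rw [hGre z, hPsphere z hz]
    by_cases hcase : dist z w₁ < d
    · have h2 := hyp2 z hz (lt_of_lt_of_le hcase (min_le_left _ _))
      refine h2.trans ?_
      rw [EReal.coe_le_coe_iff]
      have hpow : (1 - dist z w₁ ^ 2 / (4 * s ^ 2)) ^ n ≤ 1 := pow_le_one₀ hB0 hB1
      have hρn : 0 ≤ ρ₁^n := pow_nonneg hρ₁0 n
      nlinarith
    · push_neg at hcase
      have h2 := hyp1 z hz
      refine h2.trans ?_
      rw [EReal.coe_le_coe_iff]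
      have hBle : 1 - dist z w₁ ^ 2 / (4 * s ^ 2) ≤ ρ₁ := by
        rw [hρ₁]
        have hd2 : d^2 ≤ dist z w₁^2 := by nlinarith
        have h6 : d^2/(4*s^2) ≤ dist z w₁^2/(4*s^2) := by gcongr
        linarith
      have hpow : (1 - dist z w₁ ^ 2 / (4 * s ^ 2)) ^ n ≤ ρ₁^n := pow_le_pow_left₀ hB0 hBle n
      nlinarith
  have hfinal := analytic_dom u hsub hs hsρ hGdiff hsphere a (mem_closedBall_self hs.le)
  refine ⟨ε * ((2*n).choose n / 4^n - ρ₁^n), ?_, ?_⟩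
  · have h4 : (4:ℝ)^n ≤ (2*(n:ℝ)+1) * ((2*n).choose n : ℝ) := by
      have h := Nat.four_pow_le_two_mul_add_one_mul_central_binom n
      exact_mod_cast h
    have hlow : (1:ℝ)/(2*(n:ℝ)+1) ≤ ((2*n).choose n : ℝ)/4^n := by
      rw [div_le_div_iff₀ (by positivity) (by positivity)]
      linarith
    have : ρ₁^n < ((2*n).choose n : ℝ)/4^n := by
      have h5 : ρ₁^n < 1/(2*(n:ℝ)+1) := by
        rw [lt_div_iff₀ (by positivity)]
        linarith [hn]
      linarith
    have h7 : 0 < ((2*n).choose n : ℝ)/4^n - ρ₁^n := by linarith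
    exact mul_pos hε h7
  · rw [hGre a, hPa] at hfinal
    exact hfinal

lemma annulus_dom (u : ℂ → EReal) (hsub : SubharmonicC u) (M : ℝ)
    (hM : ∀ z, u z ≤ ((M : ℝ) : EReal)) (z₀ : ℂ) (δ R α β : ℝ)
    (hδ : 0 < δ) (hδR : δ < R) (hβ : 0 ≤ β)
    (hin : ∀ w ∈ sphere z₀ δ, u w ≤ ((α + β * Real.log δ : ℝ) : EReal))
    (hout : ∀ w ∈ sphere z₀ R, u w ≤ ((α + β * Real.log R : ℝ) : EReal)) :
    ∀ w, δ ≤ dist w z₀ → dist w z₀ ≤ R →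
      u w ≤ ((α + β * Real.log (dist w z₀) : ℝ) : EReal) := by
  set h : ℂ → ℝ := fun w => α + β * Real.log (dist w z₀) with hh
  set D : Set ℂ := Metric.closedBall z₀ R \ Metric.ball z₀ δ with hD
  have hDmem : ∀ w, w ∈ D ↔ (dist w z₀ ≤ R ∧ δ ≤ dist w z₀) := by
    intro w
    constructor
    · rintro ⟨h1, h2⟩
      exact ⟨mem_closedBall.mp h1, not_lt.mp (fun hc => h2 (mem_ball.mpr hc))⟩
    · rintro ⟨h1, h2⟩
      exact ⟨mem_closedBall.mpr h1, fun hc => (not_lt.mpr h2) (mem_ball.mp hc)⟩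
  have hDcomp : IsCompact D := (isCompact_closedBall z₀ R).diff isOpen_ball
  have husc : ∀ q : ℝ, IsOpen {z : ℂ | u z < ((q:ℝ) : EReal)} := by
    intro q
    exact hsub.1.isOpen_preimage _
  -- key nbhd construction : around any point w with u w < h w + t, an open set
  -- on which (within D) u < h + t - e for some e > 0
  have key : ∀ (t : ℝ) (w : ℂ), δ ≤ dist w z₀ → u w < ((h w + t : ℝ) : EReal) →
      ∃ e : ℝ, 0 < e ∧ ∃ V : Set ℂ, IsOpen V ∧ w ∈ V ∧
        ∀ z, z ∈ V → δ ≤ dist z z₀ → u z ≤ ((h z + t - e : ℝ) : EReal) := by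
    intro t w hwδ hwlt
    obtain ⟨q, hq1, hq2⟩ := EReal.exists_between_coe_real hwlt
    have hq2' : q < h w + t := EReal.coe_lt_coe_iff.mp hq2
    set εq : ℝ := h w + t - q with hεq
    have hεqpos : 0 < εq := by rw [hεq]; linarith
    have hwpos : 0 < dist w z₀ := lt_of_lt_of_le hδ hwδ
    set r' : ℝ := dist w z₀ * Real.exp (-(εq/(2*(β+1)))) with hr'
    have hexp1 : Real.exp (-(εq/(2*(β+1)))) < 1 := by
      rw [Real.exp_lt_one_iff]
      have : 0 < εq/(2*(β+1)) := by positivity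
      linarith
    have hexppos : 0 < Real.exp (-(εq/(2*(β+1)))) := Real.exp_pos _
    have hr'pos : 0 < r' := by rw [hr']; positivity
    have hr'lt : r' < dist w z₀ := by
      rw [hr']
      nlinarith
    have hlogr' : Real.log r' = Real.log (dist w z₀) - εq/(2*(β+1)) := by
      rw [hr', Real.log_mul (ne_of_gt hwpos) (ne_of_gt hexppos), Real.log_exp]
      ring
    have harc : ∀ z, δ ≤ dist z z₀ → r' < dist z z₀ → q ≤ h z + t - εq/2 := by
      intro z hzδ hzr'
      have hlog : Real.log r' ≤ Real.log (dist z z₀) := Real.log_le_log hr'pos hzr'.le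
      have hβlog : β * Real.log r' ≤ β * Real.log (dist z z₀) := by nlinarith
      have hfrac : β * (εq/(2*(β+1))) ≤ εq/2 := by
        have hb1 : (0:ℝ) < β + 1 := by linarith
        have e1 : εq/(2*(β+1)) * (2*(β+1)) = εq := div_mul_cancel₀ _ (by positivity)
        have hx : 0 ≤ εq/(2*(β+1)) := by positivity
        nlinarith
      have : h z ≥ h w - εq/2 := by
        rw [hh]
        simp only
        rw [hlogr'] at hβlog
        nlinarith
      rw [hεq] at *
      linarith
    refine ⟨εq/2, by positivity, {z : ℂ | u z < ((q:ℝ) : EReal)} ∩ {z : ℂ | r' < dist z z₀},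
      (husc q).inter (isOpen_lt continuous_const (continuous_id.dist continuous_const)),
      ⟨hq1, hr'lt⟩, ?_⟩
    rintro z ⟨hz1, hz2⟩ hzδ
    have := harc z hzδ hz2
    exact (le_of_lt hz1).trans (EReal.coe_le_coe_iff.mpr this)
  -- the set S of admissible constants
  set S : Set ℝ := {t : ℝ | ∀ w ∈ D, u w ≤ ((h w + t : ℝ) : EReal)} with hS
  have hup : ∀ {t t' : ℝ}, t ∈ S → t ≤ t' → t' ∈ S := by
    intro t t' ht htt' w hw
    exact (ht w hw).trans (EReal.coe_le_coe_iff.mpr (by linarith))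
  have hS0 : (M - α - β * Real.log δ) ∈ S := by
    intro w hw
    refine (hM w).trans (EReal.coe_le_coe_iff.mpr ?_)
    rw [hh]
    simp only
    obtain ⟨h1, h2⟩ := (hDmem w).mp hw
    have := Real.log_le_log hδ h2
    nlinarith
  have MAIN : ∀ t : ℝ, 0 < t → t ∈ S := by
    by_contra hcon
    push_neg at hcon
    obtain ⟨t₀, ht₀pos, ht₀⟩ := hcon
    have hbdd : BddBelow S := by
      refine ⟨t₀, fun t'' ht'' => ?_⟩
      by_contra hlt
      push_neg at hlt
      exact ht₀ (hup ht'' hlt.le)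
    have hSne : S.Nonempty := ⟨_, hS0⟩
    set t' : ℝ := sInf S with ht'def
    have ht'lb : t₀ ≤ t' := by
      apply le_csInf hSne
      intro b hb
      by_contra hlt
      push_neg at hlt
      exact ht₀ (hup hb hlt.le)
    have ht'pos : 0 < t' := lt_of_lt_of_le ht₀pos ht'lb
    have ht'S : t' ∈ S := by
      intro w hw
      apply ereal_le_of_forall_add
      intro ε hε
      obtain ⟨t₁, ht₁S, ht₁lt⟩ := Real.lt_sInf_add_pos hSne hε
      refine (ht₁S w hw).trans (EReal.coe_le_coe_iff.mpr ?_)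
      rw [← ht'def] at ht₁lt
      linarith
    -- extremal set
    set E : Set ℂ := {w | w ∈ D ∧ ((h w + t' : ℝ) : EReal) ≤ u w} with hE
    by_cases hEne : E.Nonempty
    · -- contradiction via bump at extremal point
      have hEclosed : IsClosed E := by
        apply isClosed_of_closure_subset
        intro w hw
        have hwD : w ∈ D := hDcomp.isClosed.closure_subset
          ((closure_mono (fun z hz => hz.1)) hw)
        refine ⟨hwD, ?_⟩
        by_contra hlt
        push_neg at hlt
        obtain ⟨e, hepos, V, hVopen, hwV, hVprop⟩ :=
          key t' w ((hDmem w).mp hwD).2 hlt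
        obtain ⟨w', hw'V, hw'E⟩ := _root_.mem_closure_iff.mp hw V hVopen hwV
        have h1 := hVprop w' hw'V ((hDmem w').mp hw'E.1).2
        have h2 := hw'E.2
        have := h2.trans h1
        rw [EReal.coe_le_coe_iff] at this
        linarith
      have hEcomp : IsCompact E := hDcomp.of_isClosed_subset hEclosed (fun z hz => hz.1)
      obtain ⟨wm, hwmE, hwmmax⟩ := hEcomp.exists_isMaxOn hEne
        ((continuous_id.dist continuous_const).continuousOn)
      have hwmD : wm ∈ D := hwmE.1
      obtain ⟨hwmR, hwmδ⟩ := (hDmem wm).mp hwmD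
      set rs : ℝ := dist wm z₀ with hrs
      have hrspos : 0 < rs := lt_of_lt_of_le hδ hwmδ
      -- wm not on boundary spheres
      have hne1 : δ < rs := by
        rcases lt_or_eq_of_le hwmδ with hlt | heq
        · exact hlt
        · exfalso
          have hsph : wm ∈ sphere z₀ δ := by
            rw [mem_sphere, ← hrs]
            exact heq.symm
          have h1 := hin wm hsph
          have h2 : h wm = α + β * Real.log δ := by
            rw [hh]
            simp only
            rw [← hrs, ← heq]
          have h3 := hwmE.2
          rw [h2] at h3
          have := h3.trans h1
          rw [EReal.coe_le_coe_iff] at this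
          linarith
      have hne2 : rs < R := by
        rcases lt_or_eq_of_le hwmR with hlt | heq
        · exact hlt
        · exfalso
          have hsph : wm ∈ sphere z₀ R := by
            rw [mem_sphere, ← hrs]
            exact heq
          have h1 := hout wm hsph
          have h2 : h wm = α + β * Real.log R := by
            rw [hh]
            simp only
            rw [← hrs, heq]
          have h3 := hwmE.2
          rw [h2] at h3
          have := h3.trans h1
          rw [EReal.coe_le_coe_iff] at this
          linarith
      set s : ℝ := min ((R - rs)/2) ((rs - δ)/2) with hsdef
      have hspos : 0 < s := lt_min (by linarith) (by linarith)
      have hs1 : s ≤ (R - rs)/2 := min_le_left _ _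
      have hs2 : s ≤ (rs - δ)/2 := min_le_right _ _
      have hsrs : s < rs := by linarith
      set ρ : ℝ := (s + rs)/2 with hρdef
      have hsρ : s < ρ := by rw [hρdef]; linarith
      have hρrs : ρ < rs := by rw [hρdef]; linarith
      have hwmz₀ : wm - z₀ ≠ 0 := by
        rw [sub_ne_zero]
        intro hc
        rw [hc, dist_self] at hrs
        exact hrspos.ne' hrs
      have habswm : ‖wm - z₀‖ = rs := by
        rw [hrs, Complex.dist_eq]
      set w₁ : ℂ := wm + ((s/rs : ℝ) : ℂ) * (wm - z₀) with hw₁def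
      have hw₁sphere : w₁ ∈ sphere wm s := by
        rw [mem_sphere, Complex.dist_eq]
        have : w₁ - wm = ((s/rs : ℝ) : ℂ) * (wm - z₀) := by rw [hw₁def]; ring
        rw [this, norm_mul, Complex.norm_real, Real.norm_eq_abs, habswm, _root_.abs_div,
          _root_.abs_of_nonneg hspos.le, _root_.abs_of_nonneg hrspos.le]
        field_simp
      have hw₁dist : dist w₁ z₀ = rs + s := by
        rw [Complex.dist_eq]
        have : w₁ - z₀ = ((1 + s/rs : ℝ) : ℂ) * (wm - z₀) := by
          rw [hw₁def]
          push_cast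
          ring
        rw [this, norm_mul, Complex.norm_real, Real.norm_eq_abs, habswm,
          _root_.abs_of_nonneg (by positivity : (0:ℝ) ≤ 1 + s/rs)]
        field_simp
        try ring
      have hw₁D : w₁ ∈ D := by
        rw [hDmem, hw₁dist]
        constructor <;> linarith
      have hw₁notE : w₁ ∉ E := by
        intro hc
        have h2 : dist w₁ z₀ ≤ rs := hwmmax hc
        rw [hw₁dist] at h2
        linarith
      have hw₁lt : u w₁ < ((h w₁ + t' : ℝ) : EReal) := by
        by_contra hc
        push_neg at hc
        exact hw₁notE ⟨hw₁D, hc⟩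
      -- the comparison function f
      set f : ℂ → ℂ := fun z => ((α + t' : ℝ) : ℂ) +
        ((β : ℝ) : ℂ) * (Complex.log (wm - z₀) + Complex.log ((z - z₀) / (wm - z₀))) with hf
      have hfre : ∀ z : ℂ, z ≠ z₀ → (f z).re = h z + t' := by
        intro z hz
        rw [hf]
        simp only [Complex.add_re, Complex.ofReal_re, Complex.re_ofReal_mul,
          Complex.log_re, norm_div, habswm]
        rw [Real.log_div (by
            rw [← Complex.dist_eq] at *
            exact fun hc => hz (by rwa [dist_eq_zero] at hc))
          (ne_of_gt hrspos)]
        rw [hh]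
        simp only
        rw [Complex.dist_eq]
        ring
      have hfdiff : DifferentiableOn ℂ f (Metric.ball wm ρ) := by
        intro z hz
        apply DifferentiableAt.differentiableWithinAt
        apply DifferentiableAt.const_add
        apply DifferentiableAt.const_mul
        apply DifferentiableAt.const_add
        have hgz : (z - z₀) / (wm - z₀) ∈ Complex.slitPlane := by
          apply Complex.mem_slitPlane_iff.mpr
          left
          have hdecomp : (z - z₀) / (wm - z₀) = 1 + (z - wm) / (wm - z₀) := by
            rw [add_div' _ _ _ hwmz₀]; congr 1; ring
          rw [hdecomp]
          have habs : ‖(z - wm) / (wm - z₀)‖ < 1 := by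
            rw [norm_div, habswm, div_lt_one hrspos, ← Complex.dist_eq]
            exact lt_of_lt_of_le (mem_ball.mp hz) hρrs.le
          have hre := Complex.abs_re_le_norm ((z - wm) / (wm - z₀))
          have hresum : (1 + (z - wm) / (wm - z₀)).re
              = 1 + ((z - wm) / (wm - z₀)).re := by simp
          rw [hresum]
          have hneg := neg_abs_le (((z - wm) / (wm - z₀)).re)
          linarith
        exact (Complex.differentiableAt_log hgz).comp z
          (((differentiableAt_id.sub_const z₀).div_const (wm - z₀)))
      -- sphere wm s sits inside D and avoids z₀
      have hsphD : ∀ z ∈ sphere wm s, z ∈ D ∧ z ≠ z₀ := by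
        intro z hz
        have hzd : dist z wm = s := mem_sphere.mp hz
        have h1 : dist z z₀ ≤ dist z wm + dist wm z₀ := dist_triangle _ _ _
        have h2 : dist wm z₀ ≤ dist wm z + dist z z₀ := dist_triangle _ _ _
        rw [dist_comm wm z] at h2
        rw [← hrs] at h1 h2
        rw [hzd] at h1 h2
        have hlow : δ ≤ dist z z₀ := by linarith
        refine ⟨(hDmem z).mpr ⟨by linarith, hlow⟩, ?_⟩
        intro hc
        rw [hc, dist_self] at hlow
        linarith
      have hyp1 : ∀ z ∈ sphere wm s, u z ≤ (((f z).re : ℝ) : EReal) := by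
        intro z hz
        obtain ⟨hzD, hzz₀⟩ := hsphD z hz
        rw [hfre z hzz₀]
        exact ht'S z hzD
      obtain ⟨e, hepos, V, hVopen, hw₁V, hVprop⟩ :=
        key t' w₁ (by rw [hw₁dist]; linarith) hw₁lt
      obtain ⟨δ₁, hδ₁pos, hδ₁sub⟩ := Metric.isOpen_iff.mp hVopen w₁ hw₁V
      have hyp2 : ∀ z ∈ sphere wm s, dist z w₁ < δ₁ → u z ≤ (((f z).re - e : ℝ) : EReal) := by
        intro z hz hzd
        obtain ⟨hzD, hzz₀⟩ := hsphD z hz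
        have hzV : z ∈ V := hδ₁sub (mem_ball.mpr hzd)
        have hres := hVprop z hzV ((hDmem z).mp hzD).2
        rw [hfre z hzz₀]
        exact hres
      obtain ⟨c, hcpos, hcle⟩ :=
        bump_dom u hsub hspos hsρ hfdiff hepos hδ₁pos hw₁sphere hyp1 hyp2
      have hwmne : wm ≠ z₀ := fun hc => hwmz₀ (by rw [hc, sub_self])
      rw [hfre wm hwmne] at hcle
      have h2 := hwmE.2.trans hcle
      rw [EReal.coe_le_coe_iff] at h2
      linarith
    · -- E empty : lower t' by compactness, contradiction with sInf
      rw [Set.not_nonempty_iff_eq_empty] at hEne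
      have hallbelow : ∀ w ∈ D, u w < ((h w + t' : ℝ) : EReal) := by
        intro w hw
        by_contra hc
        push_neg at hc
        have : w ∈ E := ⟨hw, hc⟩
        rw [hEne] at this
        exact this
      -- choose data for each point of D
      have hchoice : ∀ w : ↥D, ∃ e : ℝ, 0 < e ∧ ∃ V : Set ℂ, IsOpen V ∧ (w : ℂ) ∈ V ∧
          ∀ z, z ∈ V → δ ≤ dist z z₀ → u z ≤ ((h z + t' - e : ℝ) : EReal) := by
        rintro ⟨w, hw⟩
        exact key t' w ((hDmem w).mp hw).2 (hallbelow w hw)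
      choose efun hepos Vfun hVopen hVmem hVprop using hchoice
      obtain ⟨F, hF⟩ := hDcomp.elim_finite_subcover Vfun hVopen
        (fun z hz => Set.mem_iUnion.mpr ⟨⟨z, hz⟩, hVmem ⟨z, hz⟩⟩)
      have hDne : D.Nonempty := by
        refine ⟨z₀ + ((δ:ℝ):ℂ), ?_⟩
        rw [hDmem]
        have : dist (z₀ + ((δ:ℝ):ℂ)) z₀ = δ := by
          rw [Complex.dist_eq]
          have : z₀ + ((δ:ℝ):ℂ) - z₀ = ((δ:ℝ):ℂ) := by ring
          rw [this, Complex.norm_real, Real.norm_eq_abs, _root_.abs_of_pos hδ]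
        rw [this]
        exact ⟨hδR.le, le_refl δ⟩
      have hFne : F.Nonempty := by
        obtain ⟨z, hz⟩ := hDne
        have := hF hz
        rw [Set.mem_iUnion₂] at this
        obtain ⟨i, hiF, _⟩ := this
        exact ⟨i, hiF⟩
      set ε₀ : ℝ := F.inf' hFne efun with hε₀
      have hε₀pos : 0 < ε₀ := by
        rw [hε₀, Finset.lt_inf'_iff]
        intro i _
        exact hepos i
      have hmem : (t' - ε₀) ∈ S := by
        intro z hz
        have := hF hz
        rw [Set.mem_iUnion₂] at this
        obtain ⟨i, hiF, hzV⟩ := this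
        have h1 := hVprop i z hzV ((hDmem z).mp hz).2
        refine h1.trans (EReal.coe_le_coe_iff.mpr ?_)
        have : ε₀ ≤ efun i := Finset.inf'_le _ hiF
        linarith
      have := csInf_le hbdd hmem
      rw [← ht'def] at this
      linarith
  intro w h1 h2
  apply ereal_le_of_forall_add
  intro ε hε
  have hwD : w ∈ D := (hDmem w).mpr ⟨h2, h1⟩
  have h3 := MAIN ε hε w hwD
  rw [hh] at h3
  exact h3

/-- A bounded-above subharmonic function on ℂ that takes the value -∞ at some point
is identically -∞. -/
theorem stmt_8 (u : ℂ → EReal) (hsub : SubharmonicC u)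
    (hbd : ∃ M : ℝ, ∀ z, u z ≤ (M : EReal)) (h : ∃ z₀, u z₀ = ⊥) :
    ∀ z, u z = ⊥ := by
  obtain ⟨M, hM⟩ := hbd
  obtain ⟨z₀, hz₀⟩ := h
  intro z
  apply ereal_eq_bot_of_forall
  intro t
  set t' : ℝ := min t M with ht'def
  have ht'M : t' ≤ M := min_le_right _ _
  have ht't : t' ≤ t := min_le_left _ _
  refine le_trans ?_ (EReal.coe_le_coe_iff.mpr ht't)
  -- USC at z₀ gives a small ball where u < t'
  have husc := hsub.1 z₀ ((t' : ℝ) : EReal) (lt_of_eq_of_lt hz₀ (EReal.bot_lt_coe t'))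
  rw [Metric.eventually_nhds_iff] at husc
  obtain ⟨δ₀, hδ₀pos, hδ₀⟩ := husc
  set δ : ℝ := δ₀ / 2 with hδdef
  have hδpos : 0 < δ := by positivity
  have hball : ∀ w, dist w z₀ ≤ δ → u w < ((t' : ℝ) : EReal) := by
    intro w hw
    exact hδ₀ (lt_of_le_of_lt hw (by rw [hδdef]; linarith))
  by_cases hz : dist z z₀ ≤ δ
  · exact (hball z hz).le
  push_neg at hz
  set rz : ℝ := dist z z₀ with hrz
  have hrzδ : δ < rz := hz
  apply ereal_le_of_forall_add
  intro ε hε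
  set L : ℝ := (M - t') * Real.log (rz / δ) with hL
  have hLnn : 0 ≤ L := by
    rw [hL]
    have h1 : (1:ℝ) ≤ rz/δ := by
      rw [le_div_iff₀ hδpos]
      linarith
    have := Real.log_nonneg h1
    nlinarith
  set R : ℝ := max (rz + 1) (δ * Real.exp (L/ε + 1)) with hR
  have hRrz : rz + 1 ≤ R := le_max_left _ _
  have hRδ : δ < R := by
    have : δ < rz + 1 := by linarith
    linarith [le_max_left (rz+1) (δ * Real.exp (L/ε + 1))]
  have hRpos : 0 < R := lt_trans hδpos hRδ
  have hlogRδ : L/ε + 1 ≤ Real.log (R / δ) := by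
    have h1 : δ * Real.exp (L/ε + 1) ≤ R := le_max_right _ _
    have h2 : Real.exp (L/ε + 1) ≤ R / δ := by
      rw [le_div_iff₀ hδpos]
      linarith [h1]
    calc L/ε + 1 = Real.log (Real.exp (L/ε + 1)) := (Real.log_exp _).symm
      _ ≤ Real.log (R / δ) := Real.log_le_log (Real.exp_pos _) h2
  have hlogpos : 0 < Real.log (R / δ) := by
    have : (0:ℝ) ≤ L/ε := by positivity
    linarith
  set β : ℝ := (M - t') / Real.log (R / δ) with hβdef
  have hβnn : 0 ≤ β := by
    rw [hβdef]
    apply div_nonneg (by linarith) hlogpos.le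
  set α : ℝ := t' - β * Real.log δ with hαdef
  have hlogdiv : Real.log (R / δ) = Real.log R - Real.log δ :=
    Real.log_div (ne_of_gt hRpos) (ne_of_gt hδpos)
  have hin : ∀ w ∈ sphere z₀ δ, u w ≤ ((α + β * Real.log δ : ℝ) : EReal) := by
    intro w hw
    have : α + β * Real.log δ = t' := by rw [hαdef]; ring
    rw [this]
    exact (hball w (mem_sphere.mp hw).le).le
  have hout : ∀ w ∈ sphere z₀ R, u w ≤ ((α + β * Real.log R : ℝ) : EReal) := by
    intro w _
    refine (hM w).trans (EReal.coe_le_coe_iff.mpr ?_)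
    have : α + β * Real.log R = t' + β * Real.log (R/δ) := by
      rw [hαdef, hlogdiv]; ring
    rw [this, hβdef]
    rw [div_mul_cancel₀ _ (ne_of_gt hlogpos)]
    linarith
  have hres := annulus_dom u hsub M hM z₀ δ R α β hδpos hRδ hβnn hin hout z hrzδ.le
    (by rw [← hrz]; linarith)
  rw [← hrz] at hres
  refine hres.trans (EReal.coe_le_coe_iff.mpr ?_)
  have h1 : α + β * Real.log rz = t' + β * Real.log (rz/δ) := by
    rw [hαdef, Real.log_div (ne_of_gt (lt_trans hδpos hrzδ)) (ne_of_gt hδpos)]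
    ring
  rw [h1]
  have h2 : β * Real.log (rz/δ) = L / Real.log (R/δ) := by
    rw [hβdef, hL]
    ring
  rw [h2]
  have h3 : L / Real.log (R/δ) ≤ ε := by
    rw [div_le_iff₀ hlogpos]
    have h4 : ε * (L/ε + 1) = L + ε := by
      field_simp
    nlinarith [hlogRδ, hε.le, hLnn]
  linarith
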